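/- Let 𝔽 be a field, G a group, H a subgroup of G, and g₀ ∈ H. Let χ̄₁, χ̄₂ : G → 𝔽ˣ be group homomorphisms with χ̄₁(g₀) ≠ χ̄₂(g₀), and set χ̄ = χ̄₁·χ̄₂⁻¹. Let f : G → 𝔽 be a function, not identically zero, satisfying the cocycle relation f(gh) = f(g) + χ̄(g)⁻¹·f(h) for all g, h ∈ G, such that f(h) = 0 for all h ∈ H, and assume that every function f'' : G → 𝔽 satisfying the same cocycle relation and vanishing identically on H is an 𝔽-scalar multiple of f. Define ρ̄_c : G → GL₂(𝔽) by ρ̄_c(g) = [[χ̄₂(g), χ̄₁(g)·f(g)],[0, χ̄₁(g)]]. Let 𝔽[ε] = 𝔽[X]/(X²) be the ring of dual numbers over 𝔽 and let ρ : G → GL₂(𝔽[ε]) be a group homomorphism such that: the entrywise reduction of ρ modulo (ε) equals ρ̄_c; ρ(h) is a diagonal matrix for every h ∈ H; and, for all g ∈ G, tr(ρ(g)) = χ̄₁(g) + χ̄₂(g) and det(ρ(g)) = χ̄₁(g)·χ̄₂(g), where 𝔽 is viewed inside 𝔽[ε] via the canonical inclusion. Then there exists P ∈ GL₂(𝔽[ε])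 with P ≡ Id (mod ε) such that P·ρ(g)·P⁻¹ = ρ̄_c(g) (viewed in GL₂(𝔽[ε]) via the inclusion 𝔽 → 𝔽[ε]) for every g ∈ G. -/

import Mathlib

open TrivSqZeroExt MulOpposite

theorem dual_snd_mul {F : Type*} [CommRing F] (x y : DualNumber F) :
    (x * y).snd = x.fst * y.snd + y.fst * x.snd := by
  rw [TrivSqZeroExt.snd_mul, smul_eq_mul, op_smul_eq_mul]; ring

/-- The representation-theoretic core of Lemma 2.3 of the paper: let `𝔽` be a field,
`H ≤ G`, `g₀ ∈ H`, `χ̄₁, χ̄₂ : G → 𝔽ˣ` with `χ̄₁(g₀) ≠ χ̄₂(g₀)`, and let `f` be a nonzero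
cocycle for `χ̄⁻¹ = χ̄₁⁻¹χ̄₂` vanishing on `H`, spanning the space of such cocycles.  Then any
deformation `ρ` of `ρ̄_c = [[χ̄₂, χ̄₁·f],[0, χ̄₁]]` to the dual numbers `𝔽[ε]` which is
diagonal on `H` and satisfies `tr ρ = χ̄₁ + χ̄₂`, `det ρ = χ̄₁·χ̄₂` is conjugate to `ρ̄_c` by
a matrix congruent to the identity mod `ε`. -/
theorem stmt_3 {𝔽 : Type*} [Field 𝔽] {G : Type*} [Group G]
    (H : Subgroup G) (g₀ : G) (hg₀ : g₀ ∈ H)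
    (χb₁ χb₂ : G →* 𝔽ˣ)
    (hdist : χb₁ g₀ ≠ χb₂ g₀)
    (f : G → 𝔽)
    (hfne : ∃ g : G, f g ≠ 0)
    (hcocycle : ∀ g h : G,
      f (g * h) = f g + (((χb₁ g)⁻¹ * χb₂ g : 𝔽ˣ) : 𝔽) * f h)
    (hfH : ∀ h ∈ H, f h = 0)
    (hspan : ∀ f'' : G → 𝔽,
      (∀ g h : G, f'' (g * h) = f'' g + (((χb₁ g)⁻¹ * χb₂ g : 𝔽ˣ) : 𝔽) * f'' h) →
      (∀ h ∈ H, f'' h = 0) →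
      ∃ x : 𝔽, ∀ g : G, f'' g = x * f g)
    (ρ : G →* GL (Fin 2) (DualNumber 𝔽))
    (hred : ∀ g : G, ∀ i j : Fin 2,
      ((ρ g : Matrix (Fin 2) (Fin 2) (DualNumber 𝔽)) i j).fst
        = (!![(χb₂ g : 𝔽), (χb₁ g : 𝔽) * f g; 0, (χb₁ g : 𝔽)] : Matrix (Fin 2) (Fin 2) 𝔽) i j)
    (hHdiag : ∀ h ∈ H, (ρ h : Matrix (Fin 2) (Fin 2) (DualNumber 𝔽)) 0 1 = 0 ∧
      (ρ h : Matrix (Fin 2) (Fin 2) (DualNumber 𝔽)) 1 0 = 0)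
    (htr : ∀ g : G, Matrix.trace (ρ g : Matrix (Fin 2) (Fin 2) (DualNumber 𝔽))
      = algebraMap 𝔽 (DualNumber 𝔽) ((χb₁ g : 𝔽) + (χb₂ g : 𝔽)))
    (hdet : ∀ g : G, Matrix.det (ρ g : Matrix (Fin 2) (Fin 2) (DualNumber 𝔽))
      = algebraMap 𝔽 (DualNumber 𝔽) ((χb₁ g : 𝔽) * (χb₂ g : 𝔽))) :
    ∃ P : GL (Fin 2) (DualNumber 𝔽),
      (∀ i j : Fin 2, ((P : Matrix (Fin 2) (Fin 2) (DualNumber 𝔽)) i j).fst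
        = (1 : Matrix (Fin 2) (Fin 2) 𝔽) i j) ∧
      (∀ g : G, ((P * ρ g * P⁻¹ : GL (Fin 2) (DualNumber 𝔽))
          : Matrix (Fin 2) (Fin 2) (DualNumber 𝔽))
        = (!![(χb₂ g : 𝔽), (χb₁ g : 𝔽) * f g; 0, (χb₁ g : 𝔽)]
            : Matrix (Fin 2) (Fin 2) 𝔽).map (algebraMap 𝔽 (DualNumber 𝔽))) := by
  classical
  obtain ⟨R, hR⟩ : ∃ R : G → Matrix (Fin 2) (Fin 2) (DualNumber 𝔽),
      ∀ g, (ρ g : Matrix (Fin 2) (Fin 2) (DualNumber 𝔽)) = R g := ⟨_, fun g => rfl⟩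
  simp only [hR] at hred hHdiag htr hdet
  -- fst values of the entries
  have hf00 : ∀ g, (R g 0 0).fst = (χb₂ g : 𝔽) := by intro g; simpa using hred g 0 0
  have hf01 : ∀ g, (R g 0 1).fst = (χb₁ g : 𝔽) * f g := by intro g; simpa using hred g 0 1
  have hf10 : ∀ g, (R g 1 0).fst = 0 := by intro g; simpa using hred g 1 0
  have hf11 : ∀ g, (R g 1 1).fst = (χb₁ g : 𝔽) := by intro g; simpa using hred g 1 1
  -- multiplicativity
  have hmul : ∀ g h : G, R (g * h) = R g * R h := by
    intro g h
    rw [← hR, ← hR, ← hR, map_mul]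
    rfl
  have hent : ∀ g h : G, ∀ i j : Fin 2,
      R (g * h) i j = R g i 0 * R h 0 j + R g i 1 * R h 1 j := by
    intro g h i j
    rw [hmul, Matrix.mul_apply, Fin.sum_univ_two]
  have esnd : ∀ g h : G, ∀ i j : Fin 2, (R (g * h) i j).snd =
      (R g i 0).fst * (R h 0 j).snd + (R h 0 j).fst * (R g i 0).snd
      + ((R g i 1).fst * (R h 1 j).snd + (R h 1 j).fst * (R g i 1).snd) := by
    intro g h i j
    rw [hent, TrivSqZeroExt.snd_add, dual_snd_mul, dual_snd_mul]
  -- trace and determinant conditions on snd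
  have hAD : ∀ g, (R g 1 1).snd = -(R g 0 0).snd := by
    intro g
    have h1 := congrArg TrivSqZeroExt.snd (htr g)
    rw [Matrix.trace_fin_two, TrivSqZeroExt.snd_add, algebraMap_eq_inl, snd_inl] at h1
    linear_combination h1
  have hDET : ∀ g, (χb₂ g : 𝔽) * (R g 1 1).snd + (χb₁ g : 𝔽) * (R g 0 0).snd
      = (χb₁ g : 𝔽) * f g * (R g 1 0).snd := by
    intro g
    have h1 := congrArg TrivSqZeroExt.snd (hdet g)
    rw [Matrix.det_fin_two, algebraMap_eq_inl, snd_inl, TrivSqZeroExt.snd_sub,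
      dual_snd_mul, dual_snd_mul, hf00, hf11, hf01, hf10] at h1
    linear_combination h1
  -- vanishing on H
  have hCH : ∀ h ∈ H, (R h 1 0).snd = 0 := by
    intro h hh; rw [(hHdiag h hh).2]; rfl
  have hBH : ∀ h ∈ H, (R h 0 1).snd = 0 := by
    intro h hh; rw [(hHdiag h hh).1]; rfl
  have hfg₀ : f g₀ = 0 := hfH g₀ hg₀
  have hvne : (χb₁ g₀ : 𝔽) ≠ (χb₂ g₀ : 𝔽) := fun h => hdist (Units.ext h)
  -- A g₀ = 0
  have hAg₀ : (R g₀ 0 0).snd = 0 := by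
    have h1 := hDET g₀
    rw [hfg₀] at h1
    have h2 : ((χb₁ g₀ : 𝔽) - (χb₂ g₀ : 𝔽)) * (R g₀ 0 0).snd = 0 := by
      linear_combination h1 - (χb₂ g₀ : 𝔽) * hAD g₀
    rcases mul_eq_zero.mp h2 with h | h
    · exact absurd (sub_eq_zero.mp h) hvne
    · exact h
  have hDg₀ : (R g₀ 1 1).snd = 0 := by rw [hAD, hAg₀, neg_zero]
  -- A ≡ 0
  have hA0 : ∀ g, (R g 0 0).snd = 0 := by
    intro g
    have e00 := esnd g₀ g 0 0
    have e11 := esnd g₀ g 1 1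
    have hADg := hAD (g₀ * g)
    have hADg' := hAD g
    simp only [hf00, hf01, hf10, hf11, hAg₀, hDg₀, hfg₀, hCH g₀ hg₀, mul_zero, zero_mul,
      add_zero, zero_add] at e00 e11
    have key : ((χb₁ g₀ : 𝔽) - (χb₂ g₀ : 𝔽)) * (R g 0 0).snd = 0 := by
      linear_combination e00 + e11 - hADg + (χb₁ g₀ : 𝔽) * hADg'
    rcases mul_eq_zero.mp key with h | h
    · exact absurd (sub_eq_zero.mp h) hvne
    · exact h
  have hD0 : ∀ g, (R g 1 1).snd = 0 := by intro g; rw [hAD, hA0, neg_zero]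
  -- C ≡ 0
  have hC0 : ∀ g, (R g 1 0).snd = 0 := by
    obtain ⟨gn, hgn⟩ := hfne
    intro g
    have e00 := esnd gn g 0 0
    simp only [hf00, hf01, hf10, hf11, hA0, mul_zero, zero_mul, add_zero, zero_add] at e00
    have h1 : (χb₁ gn : 𝔽) * f gn * (R g 1 0).snd = 0 := by linear_combination - e00
    exact (mul_eq_zero.mp h1).resolve_left (mul_ne_zero (Units.ne_zero _) hgn)
  -- B cocycle
  have eB : ∀ g h, (R (g * h) 0 1).snd
      = (χb₂ g : 𝔽) * (R h 0 1).snd + (χb₁ h : 𝔽) * (R g 0 1).snd := by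
    intro g h
    have e01 := esnd g h 0 1
    simp only [hf00, hf01, hf10, hf11, hA0, hD0, hC0, mul_zero, zero_mul, add_zero,
      zero_add] at e01
    linear_combination e01
  -- apply span hypothesis to B / χ₁
  obtain ⟨x, hx⟩ := hspan (fun g => ((χb₁ g)⁻¹ : 𝔽ˣ) * (R g 0 1).snd)
    (by
      intro g h
      rw [eB g h]
      have h1 : (χb₁ (g * h))⁻¹ = (χb₁ g)⁻¹ * (χb₁ h)⁻¹ := by
        rw [map_mul, mul_inv_rev, mul_comm]
      rw [h1, Units.val_mul]
      simp only [Units.val_inv_eq_inv_val, Units.val_mul]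
      field_simp
      ring)
    (by
      intro h hh
      simp only [hBH h hh, mul_zero])
  have hB : ∀ g, (R g 0 1).snd = (χb₁ g : 𝔽) * (x * f g) := by
    intro g
    have h1 := hx g
    have h2 : (χb₁ g : 𝔽) * (((χb₁ g)⁻¹ : 𝔽ˣ) * (R g 0 1).snd) = (χb₁ g : 𝔽) * (x * f g) := by
      rw [h1]
    rw [← mul_assoc, ← Units.val_mul, mul_inv_cancel, Units.val_one, one_mul] at h2
    exact h2
  -- the conjugating matrix
  set d : DualNumber 𝔽 := 1 + TrivSqZeroExt.inr (-x) with hd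
  set d' : DualNumber 𝔽 := 1 + TrivSqZeroExt.inr x with hd'
  have hfd : d.fst = 1 := by simp [hd]
  have hfd' : d'.fst = 1 := by simp [hd']
  have hsd : d.snd = -x := by simp [hd]
  have hsd' : d'.snd = x := by simp [hd']
  have hdd' : d * d' = 1 := by
    apply TrivSqZeroExt.ext
    · rw [fst_mul, hfd, hfd', fst_one, one_mul]
    · rw [dual_snd_mul, hfd, hfd', hsd, hsd', snd_one]; ring
  have hd'd : d' * d = 1 := by rw [mul_comm]; exact hdd'
  refine ⟨⟨!![d, 0; 0, 1], !![d', 0; 0, 1], ?_, ?_⟩, ?_, ?_⟩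
  · rw [Matrix.mul_fin_two, Matrix.one_fin_two]
    simp [hdd']
  · rw [Matrix.mul_fin_two, Matrix.one_fin_two]
    simp [hd'd]
  · intro i j
    fin_cases i <;> fin_cases j <;>
      simp [hfd, Matrix.one_apply]
  · intro g
    have hRg : R g = !![inl (χb₂ g : 𝔽),
        inl ((χb₁ g : 𝔽) * f g) + TrivSqZeroExt.inr (x * ((χb₁ g : 𝔽) * f g));
        0, inl (χb₁ g : 𝔽)] := by
      ext i j <;> fin_cases i <;> fin_cases j <;>
        simp [hf00, hf01, hf10, hf11, hA0, hD0, hC0, hB] <;> try ring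
    show !![d, 0; 0, 1] * (ρ g : Matrix (Fin 2) (Fin 2) (DualNumber 𝔽)) * !![d', 0; 0, 1] = _
    rw [hR, hRg, Matrix.mul_fin_two, Matrix.mul_fin_two]
    ext i j <;> fin_cases i <;> fin_cases j <;>
      simp [smul_eq_mul, op_smul_eq_mul, Matrix.map_apply,
        hfd, hfd', hsd, hsd', algebraMap_eq_inl] <;> try ring
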